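/- For all real numbers x > 0, the Gamma function satisfies √(2e)·((x+1/2)/e)^(x+1/2) ≤ Γ(x+1) ≤ √(2π)·((x+1/2)/e)^(x+1/2). -/

import Mathlib

open Real Filter Finset Set Topology Nat



noncomputable def gb (x : ℝ) : ℝ :=
  Real.log (Real.Gamma (x+1)) - (x+1/2)*Real.log (x+1/2) + (x+1/2)

noncomputable def hb (t : ℝ) : ℝ :=
  (t+3/2)*Real.log (t+3/2) - (t+1/2)*Real.log (t+1/2) - Real.log (t+1) - 1

lemma mono_aux {f f' : ℝ → ℝ} {a b : ℝ} (hab : a ≤ b)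
    (hd : ∀ x ∈ Set.Icc a b, HasDerivAt f (f' x) x)
    (h0 : ∀ x ∈ Set.Ioo a b, 0 ≤ f' x) : f a ≤ f b := by
  have hm : MonotoneOn f (Set.Icc a b) := by
    apply monotoneOn_of_deriv_nonneg (convex_Icc a b)
      (fun x hx => (hd x hx).continuousAt.continuousWithinAt)
      (fun x hx => ((hd x (interior_subset hx)).differentiableAt).differentiableWithinAt)
    intro x hx
    rw [interior_Icc] at hx
    rw [(hd x (Set.Ioo_subset_Icc_self hx)).deriv]
    exact h0 x hx
  exact hm (Set.left_mem_Icc.2 hab) (Set.right_mem_Icc.2 hab) hab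

lemma log_ineq1 {u : ℝ} (h0 : 0 ≤ u) (h1 : u < 1) :
    2*u ≤ Real.log (1+u) - Real.log (1-u) := by
  have key : (fun v : ℝ => Real.log (1+v) - Real.log (1-v) - 2*v) 0 ≤
      (fun v : ℝ => Real.log (1+v) - Real.log (1-v) - 2*v) u := by
    refine mono_aux (f := fun v : ℝ => Real.log (1+v) - Real.log (1-v) - 2*v)
      (f' := fun v => 1/(1+v) - (-1)/(1-v) - 2) h0 ?_ ?_
    · intro v hv
      obtain ⟨hv0, hv1⟩ := hv
      have hv1' : v < 1 := lt_of_le_of_lt hv1 h1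
      have d1 : HasDerivAt (fun y : ℝ => Real.log (1+y)) (1/(1+v)) v := by
        simpa using (((hasDerivAt_id v).const_add (1:ℝ)).log (by simp only [id_eq]; linarith))
      have d2 : HasDerivAt (fun y : ℝ => Real.log (1-y)) ((-1)/(1-v)) v := by
        have h : HasDerivAt (fun y : ℝ => 1-y) (-1) v := by
          simpa using ((hasDerivAt_id v).const_sub (1:ℝ))
        simpa using h.log (by linarith)
      exact ((d1.sub d2).sub ((hasDerivAt_id v).const_mul (2:ℝ))).congr_deriv (by simp)
    · intro v hv
      obtain ⟨hv0, hv1⟩ := hv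
      have hv1' : v < 1 := lt_trans hv1 h1
      have hne1 : (1:ℝ)+v ≠ 0 := by linarith
      have hne2 : (1:ℝ)-v ≠ 0 := by linarith
      have he : 1/(1+v) - (-1)/(1-v) - 2 = 2*v^2/((1+v)*(1-v)) := by
        field_simp; ring
      show (0:ℝ) ≤ 1/(1+v) - (-1)/(1-v) - 2
      rw [he]
      exact div_nonneg (by positivity) (by nlinarith)
  simpa using key

lemma log_ineq2 {u : ℝ} (h0 : 0 ≤ u) :
    Real.log (1+u) ≤ u - u^2/2 + u^3/3 := by
  have key : (fun v : ℝ => v - v^2/2 + v^3/3 - Real.log (1+v)) 0 ≤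
      (fun v : ℝ => v - v^2/2 + v^3/3 - Real.log (1+v)) u := by
    refine mono_aux (f := fun v : ℝ => v - v^2/2 + v^3/3 - Real.log (1+v))
      (f' := fun v => (1 - 2*v/2 + 3*v^2/3) - 1/(1+v)) h0 ?_ ?_
    · intro v hv
      obtain ⟨hv0, _⟩ := hv
      have d1 : HasDerivAt (fun y : ℝ => Real.log (1+y)) (1/(1+v)) v := by
        simpa using (((hasDerivAt_id v).const_add (1:ℝ)).log (by simp only [id_eq]; linarith))
      have d2 : HasDerivAt (fun y : ℝ => y - y^2/2 + y^3/3) (1 - 2*v/2 + 3*v^2/3) v := by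
        have := (((hasDerivAt_id v).sub (((hasDerivAt_pow 2 v)).div_const 2)).add
          (((hasDerivAt_pow 3 v)).div_const 3))
        exact this.congr_deriv (by simp)
      exact d2.sub d1
    · intro v hv
      obtain ⟨hv0, _⟩ := hv
      have hne1 : (1:ℝ)+v ≠ 0 := by linarith
      have he : (1 - 2*v/2 + 3*v^2/3) - 1/(1+v) = v^3/(1+v) := by
        field_simp; ring
      show (0:ℝ) ≤ (1 - 2*v/2 + 3*v^2/3) - 1/(1+v)
      rw [he]; positivity
  simpa using key

lemma log_ineq3 {u : ℝ} (h0 : 0 ≤ u) (h1 : u ≤ 1/2) :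
    -Real.log (1-u) ≤ u + u^2/2 + 2/3*u^3 := by
  have key : (fun v : ℝ => v + v^2/2 + 2/3*v^3 + Real.log (1-v)) 0 ≤
      (fun v : ℝ => v + v^2/2 + 2/3*v^3 + Real.log (1-v)) u := by
    refine mono_aux (f := fun v : ℝ => v + v^2/2 + 2/3*v^3 + Real.log (1-v))
      (f' := fun v => (1 + 2*v/2 + 2/3*(3*v^2)) + (-1)/(1-v)) h0 ?_ ?_
    · intro v hv
      obtain ⟨hv0, hv1⟩ := hv
      have hv1' : v < 1 := by linarith
      have d2 : HasDerivAt (fun y : ℝ => Real.log (1-y)) ((-1)/(1-v)) v := by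
        have h : HasDerivAt (fun y : ℝ => 1-y) (-1) v := by
          simpa using ((hasDerivAt_id v).const_sub (1:ℝ))
        simpa using h.log (by linarith)
      have d1 : HasDerivAt (fun y : ℝ => y + y^2/2 + 2/3*y^3) (1 + 2*v/2 + 2/3*(3*v^2)) v := by
        have := (((hasDerivAt_id v).add (((hasDerivAt_pow 2 v)).div_const 2)).add
          (((hasDerivAt_pow 3 v)).const_mul (2/3:ℝ)))
        exact this.congr_deriv (by simp)
      exact d1.add d2
    · intro v hv
      obtain ⟨hv0, hv1⟩ := hv
      have hv2 : v < 1/2 := lt_of_lt_of_le hv1 h1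
      have hne2 : (1:ℝ)-v ≠ 0 := by linarith
      have he : (1 + 2*v/2 + 2/3*(3*v^2)) + (-1)/(1-v) = v^2*(1-2*v)/(1-v) := by
        field_simp; ring
      show (0:ℝ) ≤ (1 + 2*v/2 + 2/3*(3*v^2)) + (-1)/(1-v)
      rw [he]
      have h1v : (0:ℝ) < 1 - v := by linarith
      exact div_nonneg (by nlinarith) (by linarith)
  have := key
  simp only [] at this
  simp at this
  linarith







lemma gb_step {t : ℝ} (ht : 0 ≤ t) : gb t = gb (t+1) + hb t := by
  have h1 : t + 1 ≠ 0 := by linarith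
  have h3 : (0:ℝ) < Real.Gamma (t+1) := Real.Gamma_pos_of_pos (by linarith)
  unfold gb hb
  rw [Real.Gamma_add_one h1, Real.log_mul h1 (ne_of_gt h3)]
  have e1 : t + 1 + 1/2 = t + 3/2 := by ring
  rw [e1]; ring

lemma hb_nonpos {t : ℝ} (ht : 0 ≤ t) : hb t ≤ 0 := by
  obtain ⟨a, ha⟩ : ∃ a : ℝ, a = t + 1 := ⟨_, rfl⟩
  obtain ⟨u, hu⟩ : ∃ u : ℝ, u = 1/(2*a) := ⟨_, rfl⟩
  have ha1 : (1:ℝ) ≤ a := by rw [ha]; linarith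
  have ha0 : (0:ℝ) < a := by linarith
  have hu0 : 0 < u := by rw [hu]; positivity
  have hau : a * u = 1/2 := by rw [hu]; field_simp
  have hu2 : u ≤ 1/2 := by
    have := one_div_le_one_div_of_le (by norm_num : (0:ℝ) < 2*1) (by linarith : 2*1 ≤ 2*a)
    rw [hu]; norm_num at this ⊢; linarith
  have e1 : t + 3/2 = a * (1+u) := by nlinarith [hau]
  have e2 : t + 1/2 = a * (1-u) := by nlinarith [hau]
  have e3 : t + 1 = a := ha.symm
  have h1u : (0:ℝ) < 1 + u := by linarith
  have h2u : (0:ℝ) < 1 - u := by linarith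
  have hbt : hb t = (a+1/2)*Real.log (1+u) - (a-1/2)*Real.log (1-u) - 1 := by
    unfold hb
    rw [e1, e2, e3, Real.log_mul (ne_of_gt ha0) (ne_of_gt h1u),
      Real.log_mul (ne_of_gt ha0) (ne_of_gt h2u)]
    linear_combination (Real.log a * 2 + Real.log (1+u) + Real.log (1-u)) * hau
  have b1 : (a+1/2)*Real.log (1+u) ≤ (a+1/2)*(u - u^2/2 + u^3/3) :=
    mul_le_mul_of_nonneg_left (log_ineq2 hu0.le) (by linarith)
  have b2 : (a-1/2)*(-Real.log (1-u)) ≤ (a-1/2)*(u + u^2/2 + 2/3*u^3) :=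
    mul_le_mul_of_nonneg_left (log_ineq3 hu0.le hu2) (by linarith)
  have key : (a+1/2)*(u - u^2/2 + u^3/3) + (a-1/2)*(u + u^2/2 + 2/3*u^3) ≤ 1 := by
    have h3 : a * u^3 = u^2/2 := by
      have e : a * u^3 = (a*u) * u^2 := by ring
      rw [e, hau]; ring
    nlinarith [pow_pos hu0 3]
  rw [hbt]
  nlinarith [b1, b2, key]

lemma hb_hasDeriv {t : ℝ} (ht : 0 ≤ t) :
    HasDerivAt hb (Real.log (t+3/2) - Real.log (t+1/2) - 1/(t+1)) t := by
  have d1 : HasDerivAt (fun s : ℝ => (s+3/2)*Real.log (s+3/2)) (Real.log (t+3/2) + 1) t := by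
    have h : HasDerivAt (fun s : ℝ => s + 3/2) 1 t := (hasDerivAt_id t).add_const _
    have := h.mul (h.log (by linarith))
    exact this.congr_deriv (by rw [mul_one_div_cancel (by linarith)]; ring)
  have d2 : HasDerivAt (fun s : ℝ => (s+1/2)*Real.log (s+1/2)) (Real.log (t+1/2) + 1) t := by
    have h : HasDerivAt (fun s : ℝ => s + 1/2) 1 t := (hasDerivAt_id t).add_const _
    have := h.mul (h.log (by linarith))
    exact this.congr_deriv (by rw [mul_one_div_cancel (by linarith)]; ring)
  have d3 : HasDerivAt (fun s : ℝ => Real.log (s+1)) (1/(t+1)) t := by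
    have h : HasDerivAt (fun s : ℝ => s + 1) 1 t := (hasDerivAt_id t).add_const _
    simpa using h.log (by linarith)
  have := ((d1.sub d2).sub d3).sub_const 1
  exact this.congr_deriv (by ring)

lemma hb_mono : MonotoneOn hb (Set.Ici 0) := by
  apply monotoneOn_of_deriv_nonneg (convex_Ici 0)
  · intro s hs
    exact (hb_hasDeriv hs).continuousAt.continuousWithinAt
  · intro s hs
    rw [interior_Ici] at hs
    exact (hb_hasDeriv (le_of_lt hs)).differentiableAt.differentiableWithinAt
  · intro s hs
    rw [interior_Ici] at hs
    have hs0 : (0:ℝ) < s := hs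
    rw [(hb_hasDeriv hs0.le).deriv]
    obtain ⟨u, hu⟩ : ∃ u : ℝ, u = 1/(2*(s+1)) := ⟨_, rfl⟩
    have hs1 : (0:ℝ) < s + 1 := by linarith
    have hu0 : 0 < u := by rw [hu]; positivity
    have hsu : (s+1) * u = 1/2 := by rw [hu]; field_simp
    have hu1 : u < 1 := by nlinarith
    have e1 : s + 3/2 = (s+1) * (1+u) := by nlinarith
    have e2 : s + 1/2 = (s+1) * (1-u) := by nlinarith
    have e3 : 1/(s+1) = 2*u := by
      rw [eq_comm, eq_div_iff (ne_of_gt hs1)]; nlinarith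
    have key := log_ineq1 hu0.le hu1
    rw [e1, e2, Real.log_mul (ne_of_gt hs1) (by linarith),
      Real.log_mul (ne_of_gt hs1) (by linarith), e3]
    linarith

lemma gb_tele {x : ℝ} (hx : 0 ≤ x) (N : ℕ) :
    gb x = gb (x + N) + ∑ k ∈ Finset.range N, hb (x + k) := by
  induction N with
  | zero => simp
  | succ n ih =>
    rw [ih, Finset.sum_range_succ]
    have e : x + (n+1 : ℕ) = (x + n) + 1 := by push_cast; ring
    rw [e, gb_step (by positivity)]
    ring



lemma gb_nat_eq {n : ℕ} (hn : 1 ≤ n) :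
    gb n = Real.log (Stirling.stirlingSeq n) + (1/2*Real.log 2 + 1/2)
      - ((n:ℝ) * Real.log (1 + (1/2)/n) + 1/2 * Real.log (1 + (1/2)/n)) := by
  have hn0 : (0:ℝ) < n := by exact_mod_cast hn
  have e0 : Real.Gamma ((n:ℝ)+1) = (n ! : ℝ) := Real.Gamma_nat_eq_factorial n
  have e1 : Real.log (Stirling.stirlingSeq n)
      = Real.log (n !) - 1/2 * Real.log (2*n) - n * Real.log ((n:ℝ) / Real.exp 1) :=
    Stirling.log_stirlingSeq_formula n
  have e2 : Real.log (2*(n:ℝ)) = Real.log 2 + Real.log n :=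
    Real.log_mul (by norm_num) (ne_of_gt hn0)
  have e3 : Real.log ((n:ℝ) / Real.exp 1) = Real.log n - 1 := by
    rw [Real.log_div (ne_of_gt hn0) (Real.exp_ne_zero 1), Real.log_exp]
  have e4 : Real.log (1 + (1/2)/(n:ℝ)) = Real.log ((n:ℝ)+1/2) - Real.log n := by
    rw [show (1:ℝ) + (1/2)/(n:ℝ) = ((n:ℝ)+1/2)/n by field_simp,
      Real.log_div (by linarith) (ne_of_gt hn0)]
  unfold gb
  rw [e0, e1, e2, e3, e4]
  ring

lemma gb_nat_tendsto :
    Tendsto (fun n : ℕ => gb n) atTop (𝓝 (Real.log (Real.sqrt (2*π)))) := by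
  have t1 : Tendsto (fun n : ℕ => Real.log (Stirling.stirlingSeq n)) atTop
      (𝓝 (Real.log (Real.sqrt π))) :=
    ((Real.continuousAt_log (by positivity)).tendsto).comp Stirling.tendsto_stirlingSeq_sqrt_pi
  have t2 : Tendsto (fun n : ℕ => (n:ℝ) * Real.log (1 + (1/2)/n)) atTop (𝓝 (1/2)) :=
    (Real.tendsto_mul_log_one_add_div_atTop (1/2)).comp tendsto_natCast_atTop_atTop
  have t3 : Tendsto (fun n : ℕ => Real.log (1 + (1/2)/(n:ℝ))) atTop (𝓝 0) := by
    have h1 : Tendsto (fun n : ℕ => 1 + (1/2)/(n:ℝ)) atTop (𝓝 1) := by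
      have h0 : Tendsto (fun n : ℕ => (1/2:ℝ)/(n:ℝ)) atTop (𝓝 0) :=
        Tendsto.div_atTop tendsto_const_nhds tendsto_natCast_atTop_atTop
      simpa using (tendsto_const_nhds (x := (1:ℝ))).add h0
    have := ((Real.continuousAt_log (by norm_num)).tendsto).comp h1
    rw [Real.log_one] at this; exact this
  have total := (t1.add (tendsto_const_nhds (x := 1/2*Real.log 2 + 1/2))).sub
    (t2.add (t3.const_mul (1/2)))
  have heq : Real.log (Real.sqrt π) + (1/2*Real.log 2 + 1/2) - (1/2 + 1/2 * 0)
      = Real.log (Real.sqrt (2*π)) := by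
    rw [Real.sqrt_mul (by norm_num) π, Real.log_mul
      (by positivity) (by positivity), Real.log_sqrt (by norm_num : (0:ℝ) ≤ 2),
      Real.log_sqrt Real.pi_pos.le]
    ring
  rw [← heq]
  apply total.congr'
  filter_upwards [eventually_ge_atTop 1] with n hn
  rw [gb_nat_eq hn]

lemma ratio_tendsto (p q : ℝ) :
    Tendsto (fun K : ℕ => ((K:ℝ)+p)/((K:ℝ)+q)) atTop (𝓝 1) := by
  have h1 : Tendsto (fun K : ℕ => (K:ℝ)+q) atTop atTop :=
    tendsto_atTop_add_const_right _ q tendsto_natCast_atTop_atTop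
  have h2 : Tendsto (fun K : ℕ => (p-q)/((K:ℝ)+q)) atTop (𝓝 0) :=
    tendsto_const_nhds.div_atTop h1
  have h3 : Tendsto (fun K : ℕ => 1 + (p-q)/((K:ℝ)+q)) atTop (𝓝 1) := by
    simpa using (tendsto_const_nhds (x := (1:ℝ))).add h2
  apply h3.congr'
  filter_upwards [h1.eventually_gt_atTop 0] with K hK
  field_simp; ring

lemma aux_tendsto (θ c : ℝ) (hθ0 : 0 ≤ θ) (hc : 0 ≤ c) :
    Tendsto (fun K : ℕ => θ*Real.log ((K:ℝ)+c) - ((K:ℝ)+θ+1/2)*Real.log ((K:ℝ)+θ+1/2)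
      + ((K:ℝ)+1/2)*Real.log ((K:ℝ)+1/2) + θ) atTop (𝓝 0) := by
  have hA : Tendsto (fun K : ℕ => θ * Real.log (((K:ℝ)+c)/((K:ℝ)+θ+1/2))) atTop (𝓝 0) := by
    have h1 := ratio_tendsto c (θ+1/2)
    have h1' : Tendsto (fun K : ℕ => ((K:ℝ)+c)/((K:ℝ)+θ+1/2)) atTop (𝓝 1) := by
      apply h1.congr; intro K; ring_nf
    have := ((Real.continuousAt_log (by norm_num)).tendsto).comp h1'
    rw [Real.log_one] at this
    simpa using this.const_mul θ
  have hB : Tendsto (fun K : ℕ => ((K:ℝ)+1/2) * Real.log (1 + θ/((K:ℝ)+1/2))) atTop (𝓝 θ) :=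
    (Real.tendsto_mul_log_one_add_div_atTop θ).comp
      (tendsto_atTop_add_const_right _ (1/2) tendsto_natCast_atTop_atTop)
  have total := (hA.sub hB).add (tendsto_const_nhds (x := θ))
  rw [zero_sub, neg_add_cancel] at total
  apply total.congr'
  filter_upwards [eventually_ge_atTop 1] with K hK
  have hK0 : (1:ℝ) ≤ (K:ℝ) := by exact_mod_cast hK
  have p1 : (0:ℝ) < (K:ℝ)+c := by linarith
  have p2 : (0:ℝ) < (K:ℝ)+θ+1/2 := by linarith
  have p3 : (0:ℝ) < (K:ℝ)+1/2 := by linarith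
  rw [Real.log_div (ne_of_gt p1) (ne_of_gt p2),
    show (1:ℝ) + θ/((K:ℝ)+1/2) = ((K:ℝ)+θ+1/2)/((K:ℝ)+1/2) by field_simp; ring,
    Real.log_div (ne_of_gt p2) (ne_of_gt p3)]
  ring





lemma gamma_interp {m : ℕ} (hm : 1 ≤ m) {θ : ℝ} (h0 : 0 ≤ θ) (h1 : θ < 1) :
    Real.log (m !) + θ * Real.log ((m:ℝ) + θ) ≤ Real.log (Real.Gamma ((m:ℝ) + θ + 1)) ∧
    Real.log (Real.Gamma ((m:ℝ) + θ + 1)) ≤ Real.log (m !) + θ * Real.log ((m:ℝ) + 1) := by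
  have hm1 : (1:ℝ) ≤ (m:ℝ) := by exact_mod_cast hm
  have hfact : Real.Gamma ((m:ℝ)+1) = (m ! : ℝ) := Real.Gamma_nat_eq_factorial m
  rcases eq_or_lt_of_le h0 with h0' | h0'
  · rw [← h0']
    simp [hfact.symm]
  have cx := Real.convexOn_log_Gamma
  have hfact2 : Real.Gamma ((m:ℝ)+1+1) = (((m+1) !:ℕ) : ℝ) := by
    have := Real.Gamma_nat_eq_factorial (m+1)
    push_cast at this ⊢
    convert this using 2
  have hfpos : (0:ℝ) < (m ! : ℝ) := by exact_mod_cast Nat.factorial_pos m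
  constructor
  · have mem1 : (m:ℝ) + θ ∈ Set.Ioi (0:ℝ) := by simp only [Set.mem_Ioi]; linarith
    have mem2 : (m:ℝ) + 1 + θ ∈ Set.Ioi (0:ℝ) := by simp only [Set.mem_Ioi]; linarith
    have key := cx.2 mem1 mem2 h0 (by linarith : (0:ℝ) ≤ 1 - θ) (by ring)
    simp only [smul_eq_mul, Function.comp_apply] at key
    rw [show θ*((m:ℝ)+θ) + (1-θ)*((m:ℝ)+1+θ) = (m:ℝ)+1 by ring] at key
    rw [hfact] at key
    have mpos : (0:ℝ) < (m:ℝ) + θ := by linarith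
    have hrec : Real.Gamma ((m:ℝ)+θ+1) = ((m:ℝ)+θ) * Real.Gamma ((m:ℝ)+θ) :=
      Real.Gamma_add_one (ne_of_gt mpos)
    have gpos : (0:ℝ) < Real.Gamma ((m:ℝ)+θ) := Real.Gamma_pos_of_pos mpos
    have lrec : Real.log (Real.Gamma ((m:ℝ)+θ+1))
        = Real.log ((m:ℝ)+θ) + Real.log (Real.Gamma ((m:ℝ)+θ)) := by
      rw [hrec, Real.log_mul (ne_of_gt mpos) (ne_of_gt gpos)]
    rw [show (m:ℝ)+1+θ = (m:ℝ)+θ+1 by ring] at key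
    nlinarith [key, lrec]
  · have mem1 : (m:ℝ) + 1 ∈ Set.Ioi (0:ℝ) := by simp only [Set.mem_Ioi]; linarith
    have mem2 : (m:ℝ) + 1 + 1 ∈ Set.Ioi (0:ℝ) := by simp only [Set.mem_Ioi]; linarith
    have key := cx.2 mem1 mem2 (by linarith : (0:ℝ) ≤ 1 - θ) h0 (by ring)
    simp only [smul_eq_mul, Function.comp_apply] at key
    rw [show (1-θ)*((m:ℝ)+1) + θ*((m:ℝ)+1+1) = (m:ℝ)+θ+1 by ring] at key
    rw [hfact, hfact2] at key
    have lfact2 : Real.log (((m+1) ! : ℕ) : ℝ) = Real.log ((m:ℝ)+1) + Real.log (m !) := by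
      rw [show (((m+1) ! : ℕ) : ℝ) = ((m:ℝ)+1) * (m ! : ℝ) by push_cast [Nat.factorial_succ]; ring,
        Real.log_mul (by linarith) (ne_of_gt hfpos)]
    rw [lfact2] at key
    nlinarith [key]

lemma gb_shift_tendsto {x : ℝ} (hx : 0 ≤ x) :
    Tendsto (fun n : ℕ => gb (x + n)) atTop (𝓝 (Real.log (Real.sqrt (2*π)))) := by
  obtain ⟨k, θ, hθ0, hθ1, hxk⟩ : ∃ (k : ℕ) (θ : ℝ), 0 ≤ θ ∧ θ < 1 ∧ x = k + θ :=
    ⟨⌊x⌋₊, x - ⌊x⌋₊, by linarith [Nat.floor_le hx], by linarith [Nat.lt_floor_add_one x], by ring⟩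
  have comp1 : Tendsto (fun n : ℕ => k + n) atTop atTop :=
    (tendsto_add_atTop_nat k).congr (fun n => add_comm n k)
  have hL : Tendsto (fun n : ℕ => gb ((k+n : ℕ)) + (θ*Real.log (((k+n:ℕ):ℝ)+θ)
      - (((k+n:ℕ):ℝ)+θ+1/2)*Real.log (((k+n:ℕ):ℝ)+θ+1/2)
      + (((k+n:ℕ):ℝ)+1/2)*Real.log (((k+n:ℕ):ℝ)+1/2) + θ)) atTop
      (𝓝 (Real.log (Real.sqrt (2*π)))) := by
    have base := gb_nat_tendsto.add (aux_tendsto θ θ hθ0 hθ0)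
    rw [add_zero] at base
    exact base.comp comp1
  have hU : Tendsto (fun n : ℕ => gb ((k+n : ℕ)) + (θ*Real.log (((k+n:ℕ):ℝ)+1)
      - (((k+n:ℕ):ℝ)+θ+1/2)*Real.log (((k+n:ℕ):ℝ)+θ+1/2)
      + (((k+n:ℕ):ℝ)+1/2)*Real.log (((k+n:ℕ):ℝ)+1/2) + θ)) atTop
      (𝓝 (Real.log (Real.sqrt (2*π)))) := by
    have base := gb_nat_tendsto.add (aux_tendsto θ 1 hθ0 (by norm_num))
    rw [add_zero] at base
    exact base.comp comp1
  apply tendsto_of_tendsto_of_tendsto_of_le_of_le' hL hU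
  · filter_upwards [eventually_ge_atTop 1] with n hn
    have hm : 1 ≤ k + n := by omega
    have ex : x + n = ((k+n:ℕ):ℝ) + θ := by push_cast; linarith [hxk]
    have hi := (gamma_interp hm hθ0 hθ1).1
    show gb ((k+n : ℕ)) + _ ≤ gb (x + n)
    rw [ex]
    unfold gb
    rw [Real.Gamma_nat_eq_factorial (k+n)]
    linarith [hi]
  · filter_upwards [eventually_ge_atTop 1] with n hn
    have hm : 1 ≤ k + n := by omega
    have ex : x + n = ((k+n:ℕ):ℝ) + θ := by push_cast; linarith [hxk]
    have hi := (gamma_interp hm hθ0 hθ1).2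
    show gb (x + n) ≤ gb ((k+n : ℕ)) + _
    rw [ex]
    unfold gb
    rw [Real.Gamma_nat_eq_factorial (k+n)]
    linarith [hi]


theorem gamma_bounds (x : ℝ) (hx : 0 < x) :
    Real.sqrt (2 * Real.exp 1) * ((x + 1/2) / Real.exp 1) ^ (x + 1/2) ≤ Real.Gamma (x + 1) ∧
    Real.Gamma (x + 1) ≤ Real.sqrt (2 * Real.pi) * ((x + 1/2) / Real.exp 1) ^ (x + 1/2) := by
  have hx0 : (0:ℝ) ≤ x := hx.le
  have upper : gb x ≤ Real.log (Real.sqrt (2*π)) := by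
    apply ge_of_tendsto (gb_shift_tendsto hx0)
    filter_upwards with n
    have t1 := gb_tele hx0 n
    have hsum : ∑ k ∈ Finset.range n, hb (x + k) ≤ 0 :=
      Finset.sum_nonpos fun k _ => hb_nonpos (by positivity)
    linarith
  have g0 : gb 0 = Real.log (Real.sqrt (2*Real.exp 1)) := by
    unfold gb
    rw [Real.log_sqrt (by positivity), Real.log_mul (by norm_num) (Real.exp_ne_zero 1),
      Real.log_exp, zero_add, Real.Gamma_one, Real.log_one,
      show (0:ℝ)+1/2 = (2:ℝ)⁻¹ by norm_num, Real.log_inv]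
    ring
  have lower : Real.log (Real.sqrt (2*Real.exp 1)) ≤ gb x := by
    rw [← g0]
    have key : ∀ n : ℕ, gb 0 + (gb (x+n) - gb ((0:ℝ)+n)) ≤ gb x := by
      intro n
      have t1 := gb_tele hx0 n
      have t2 := gb_tele (le_refl (0:ℝ)) n
      have hsum : ∑ k ∈ Finset.range n, hb ((0:ℝ) + k) ≤ ∑ k ∈ Finset.range n, hb (x + k) :=
        Finset.sum_le_sum fun k _ => hb_mono (by simp : ((0:ℝ)+k) ∈ Set.Ici (0:ℝ))
          (by simp [Set.mem_Ici]; positivity) (by linarith)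
      linarith
    have hdiff : Tendsto (fun n : ℕ => gb 0 + (gb (x+n) - gb ((0:ℝ)+n))) atTop (𝓝 (gb 0)) := by
      have := (gb_shift_tendsto hx0).sub (gb_shift_tendsto (le_refl (0:ℝ)))
      rw [sub_self] at this
      simpa using (tendsto_const_nhds (x := gb 0)).add this
    exact le_of_tendsto hdiff (Filter.Eventually.of_forall key)
  have hB : (0:ℝ) < (x+1/2)/Real.exp 1 := by positivity
  have hΓ : 0 < Real.Gamma (x+1) := Real.Gamma_pos_of_pos (by linarith)
  have hlogB : Real.log ((x+1/2)/Real.exp 1) = Real.log (x+1/2) - 1 := by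
    rw [Real.log_div (by linarith) (Real.exp_ne_zero 1), Real.log_exp]
  have hsq1 : (0:ℝ) < Real.sqrt (2*Real.exp 1) := Real.sqrt_pos.2 (by positivity)
  have hsq2 : (0:ℝ) < Real.sqrt (2*π) := Real.sqrt_pos.2 (by positivity)
  unfold gb at lower upper
  constructor
  · calc Real.sqrt (2*Real.exp 1) * ((x+1/2)/Real.exp 1)^(x+1/2)
        = Real.exp (Real.log (Real.sqrt (2*Real.exp 1))
            + Real.log ((x+1/2)/Real.exp 1) * (x+1/2)) := by
          rw [Real.exp_add, Real.exp_log hsq1, Real.rpow_def_of_pos hB]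
      _ ≤ Real.Gamma (x+1) := by
          rw [← Real.exp_log hΓ]
          apply Real.exp_le_exp.2
          rw [hlogB]
          nlinarith [lower]
  · calc Real.Gamma (x+1) = Real.exp (Real.log (Real.Gamma (x+1))) := (Real.exp_log hΓ).symm
      _ ≤ Real.sqrt (2*π) * ((x+1/2)/Real.exp 1)^(x+1/2) := by
          rw [show Real.sqrt (2*π) * ((x+1/2)/Real.exp 1)^(x+1/2)
              = Real.exp (Real.log (Real.sqrt (2*π))
                + Real.log ((x+1/2)/Real.exp 1) * (x+1/2)) by
            rw [Real.exp_add, Real.exp_log hsq2, Real.rpow_def_of_pos hB]]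
          apply Real.exp_le_exp.2
          rw [hlogB]
          nlinarith [upper]
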